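/- Let g ≥ 1 be odd. Then the ideal J_g^+ of ℂ[α,γ] is generated by the set {ζ_g^+, γ ζ_{g−2}^+, γ² ζ_{g−4}^+, …, γ^{(g−1)/2} ζ_1^+, γ^{(g+1)/2}}, and the residue classes of the monomials α^j γ^i with 0 ≤ i ≤ (g−1)/2 and 0 ≤ j ≤ g − 2i − 1 form a ℂ-vector space basis of the quotient ring ℂ[α,γ]/J_g^+. -/

import Mathlib

open MvPolynomial

/-- ζ_k^+ ∈ ℂ[α,γ] (variables: X 0 = α, X 1 = γ):
    ζ_{k+1}^+ = α ζ_k^+ + 16k² ζ_{k−1}^+ + 2k(k−1) γ ζ_{k−2}^+ for k even, and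
    ζ_{k+1}^+ = α ζ_k^+ + 2k(k−1) γ ζ_{k−2}^+ for k odd. -/
noncomputable def zp : ℕ → MvPolynomial (Fin 2) ℂ
  | 0 => 1
  | 1 => X 0
  | 2 => X 0 * zp 1
  | (n + 3) =>
      if n % 2 = 0 then
        X 0 * zp (n + 2) + C (16 * ((n : ℂ) + 2) ^ 2) * zp (n + 1)
          + C (2 * ((n : ℂ) + 2) * ((n : ℂ) + 1)) * X 1 * zp n
      else
        X 0 * zp (n + 2) + C (2 * ((n : ℂ) + 2) * ((n : ℂ) + 1)) * X 1 * zp n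

/-- ζ_k^+ for an integer index k, with ζ_k^+ = 0 for k < 0. -/
noncomputable def zpZ (k : ℤ) : MvPolynomial (Fin 2) ℂ :=
  if k < 0 then 0 else zp k.toNat

/-- J_g^+ = (ζ_g^+, ζ_{g+1}^+, ζ_{g+2}^+) ⊆ ℂ[α,γ], for a natural number g. -/
noncomputable def Jp (g : ℕ) : Ideal (MvPolynomial (Fin 2) ℂ) :=
  Ideal.span {zp g, zp (g + 1), zp (g + 2)}

/-- For g ≥ 1 odd, J_g^+ is generated by {ζ_g^+, γ ζ_{g−2}^+, …, γ^{(g−1)/2} ζ_1^+,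
    γ^{(g+1)/2}}, and the monomials α^j γ^i with 0 ≤ i ≤ (g−1)/2, 0 ≤ j ≤ g−2i−1 give a
    basis of ℂ[α,γ]/J_g^+. -/
abbrev R2 := MvPolynomial (Fin 2) ℂ

lemma zp_rec_odd (j : ℕ) : zp (2*j+2) =
    X 0 * zp (2*j+1) + C (2*(2*(j:ℂ)+1)*(2*(j:ℂ))) * X 1 * zp (2*j-1) := by
  cases j with
  | zero => simp [zp]
  | succ j =>
      have h : 2*(j+1)+2 = (2*j+1)+3 := by ring
      rw [h, zp]
      rw [if_neg (by omega)]
      have e1 : (2*j+1)+2 = 2*(j+1)+1 := by ring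
      have e2 : 2*j+1 = 2*(j+1)-1 := by omega
      rw [e1, ← e2]
      push_cast
      ring_nf

lemma zp_rec_even (j : ℕ) : zp (2*j+3) =
    X 0 * zp (2*j+2) + C (16*(2*(j:ℂ)+2)^2) * zp (2*j+1)
      + C (2*(2*(j:ℂ)+2)*(2*(j:ℂ)+1)) * X 1 * zp (2*j) := by
  have h : 2*j+3 = (2*j)+3 := by ring
  rw [h, zp, if_pos (by omega)]
  push_cast
  ring_nf

lemma zp_star1 : zp 3 = (X 0^2 + C 64) * zp 1 + C 4 * X 1 := by
  have h := zp_rec_even 0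
  norm_num at h
  rw [h, show zp 2 = X 0 * zp 1 from rfl, show zp 0 = 1 from rfl]
  simp only [C_add, C_mul, C_pow, map_ofNat, C_1, C_0]
  ring

lemma zp_star3 : zp 5 = (X 0^2 + C 256) * zp 3 + C 36 * X 1 * X 0 * zp 1 := by
  have h5 := zp_rec_even 1
  have h4 := zp_rec_odd 1
  norm_num at h5 h4
  rw [h5, h4, show zp 2 = X 0 * zp 1 from rfl]
  simp only [C_add, C_mul, C_pow, map_ofNat, C_1, C_0]
  ring

lemma zp_star (j : ℕ) : zp (2*j+7) =
    (X 0^2 + C (16*(2*(j:ℂ)+6)^2)) * zp (2*j+5)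
    + C (4*(2*(j:ℂ)+5)^2) * X 1 * X 0 * zp (2*j+3)
    + C (4*(2*(j:ℂ)+5)*(2*(j:ℂ)+6)*(2*(j:ℂ)+3)*(2*(j:ℂ)+2)) * X 1^2 * zp (2*j+1) := by
  have h7 := zp_rec_even (j+2)
  have h6 := zp_rec_odd (j+2)
  have h4 := zp_rec_odd (j+1)
  have e7 : 2*(j+2)+3 = 2*j+7 := by ring
  have e6 : 2*(j+2)+2 = 2*j+6 := by ring
  have e5 : 2*(j+2)+1 = 2*j+5 := by ring
  have e4 : 2*(j+2) = 2*(j+1)+2 := by ring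
  have e3 : 2*(j+2)-1 = 2*j+3 := by omega
  have e3' : 2*(j+1)+1 = 2*j+3 := by ring
  have e1 : 2*(j+1)-1 = 2*j+1 := by omega
  rw [e7, e6, e5, e4] at h7
  rw [e6, e5, e3] at h6
  rw [e3', e1] at h4
  rw [h7, h6, h4]
  push_cast
  simp only [C_add, C_mul, C_pow, map_ofNat, C_1, C_0]
  ring

-- weight bound for supports
lemma supp_CX1_mul {c : ℂ} {f : R2} {k : ℕ}
    (hf : ∀ d ∈ f.support, d 0 + 2 * d 1 ≤ k) :
    ∀ d ∈ (C c * X 1 * f).support, d 0 + 2 * d 1 ≤ k + 2 := by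
  intro d hd
  have h1 : C c * X 1 * f = C c * (X 1 * f) := by ring
  rw [h1] at hd
  have h2 := MvPolynomial.support_smul (a := c) (f := X 1 * f)
  rw [← MvPolynomial.smul_eq_C_mul] at hd
  have hd2 := h2 hd
  rw [MvPolynomial.support_X_mul] at hd2
  rcases Finset.mem_map.mp hd2 with ⟨e, he, rfl⟩
  have := hf e he
  simp [addLeftEmbedding_apply]
  omega

lemma supp_X0_mul {f : R2} {k : ℕ}
    (hf : ∀ d ∈ f.support, d 0 + 2 * d 1 ≤ k) :
    ∀ d ∈ (X 0 * f).support, d 0 + 2 * d 1 ≤ k + 1 := by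
  intro d hd
  rw [MvPolynomial.support_X_mul] at hd
  rcases Finset.mem_map.mp hd with ⟨e, he, rfl⟩
  have := hf e he
  simp [addLeftEmbedding_apply]
  omega

lemma supp_C_mul {c : ℂ} {f : R2} {k : ℕ}
    (hf : ∀ d ∈ f.support, d 0 + 2 * d 1 ≤ k) :
    ∀ d ∈ (C c * f).support, d 0 + 2 * d 1 ≤ k := by
  intro d hd
  rw [← MvPolynomial.smul_eq_C_mul] at hd
  exact hf d (MvPolynomial.support_smul hd)

lemma zp_wt : ∀ k : ℕ, (∀ d ∈ (zp k - X 0 ^ k).support, d 0 + 2 * d 1 < k)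
    ∧ (∀ d ∈ (zp k).support, d 0 + 2 * d 1 ≤ k) := by
  have hsub : ∀ (k : ℕ), (∀ d ∈ (zp k - X 0 ^ k).support, d 0 + 2 * d 1 < k) →
      (∀ d ∈ (zp k).support, d 0 + 2 * d 1 ≤ k) := by
    intro k h d hd
    have : zp k = (zp k - X 0 ^ k) + X 0 ^ k := by ring
    rw [this] at hd
    rcases Finset.mem_union.mp (MvPolynomial.support_add hd) with h1 | h1
    · exact le_of_lt (h d h1)
    · rw [MvPolynomial.X_pow_eq_monomial] at h1
      have := MvPolynomial.support_monomial_subset h1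
      simp at this
      subst this
      simp
  intro k
  induction k using Nat.strong_induction_on with
  | _ k ih =>
    have main : ∀ d ∈ (zp k - X 0 ^ k).support, d 0 + 2 * d 1 < k := by
      match k with
      | 0 => simp [zp]
      | 1 => simp [zp]
      | 2 =>
        have : zp 2 - X 0 ^ 2 = 0 := by
          rw [show zp 2 = X 0 * zp 1 from rfl, show zp 1 = X 0 from rfl]; ring
        simp [this]
      | (n+3) =>
        have h2 := (ih (n+2) (by omega))
        have h1 := (ih (n+1) (by omega))
        have h0 := (ih n (by omega))
        by_cases hn : n % 2 = 0
        · have : zp (n+3) - X 0 ^ (n+3) =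
              X 0 * (zp (n+2) - X 0 ^ (n+2)) + (C (16 * ((n : ℂ) + 2) ^ 2) * zp (n + 1)
              + C (2 * ((n : ℂ) + 2) * ((n : ℂ) + 1)) * X 1 * zp n) := by
            rw [zp, if_pos hn]; ring
          rw [this]
          intro d hd
          rcases Finset.mem_union.mp (MvPolynomial.support_add hd) with hA | hB
          · have := supp_X0_mul (f := zp (n+2) - X 0^(n+2)) (k := n+1)
              (fun d hd => by have := h2.1 d hd; omega) d hA
            omega
          · rcases Finset.mem_union.mp (MvPolynomial.support_add hB) with hC | hD
            · have := supp_C_mul h1.2 d hC; omega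
            · have := supp_CX1_mul h0.2 d hD; omega
        · have : zp (n+3) - X 0 ^ (n+3) =
              X 0 * (zp (n+2) - X 0 ^ (n+2))
              + C (2 * ((n : ℂ) + 2) * ((n : ℂ) + 1)) * X 1 * zp n := by
            rw [zp, if_neg hn]; ring
          rw [this]
          intro d hd
          rcases Finset.mem_union.mp (MvPolynomial.support_add hd) with hA | hB
          · have := supp_X0_mul (f := zp (n+2) - X 0^(n+2)) (k := n+1)
              (fun d hd => by have := h2.1 d hd; omega) d hA
            omega
          · have := supp_CX1_mul h0.2 d hB; omega
    exact ⟨main, hsub k main⟩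

noncomputable def Psi : R2 →ₐ[ℂ] Polynomial (Polynomial ℂ) :=
  aeval ![Polynomial.C Polynomial.X, Polynomial.X]

noncomputable def Dm (j s : ℕ) : Fin 2 →₀ ℕ := Finsupp.single 0 j + Finsupp.single 1 s

@[simp] lemma Dm_apply0 (j s : ℕ) : Dm j s 0 = j := by simp [Dm]
@[simp] lemma Dm_apply1 (j s : ℕ) : Dm j s 1 = s := by simp [Dm]

lemma eq_Dm (d : Fin 2 →₀ ℕ) : d = Dm (d 0) (d 1) := by
  ext i
  match i with
  | 0 => simp
  | 1 => simp

lemma Dm_eq_iff {j s j' s' : ℕ} : Dm j s = Dm j' s' ↔ j = j' ∧ s = s' := by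
  constructor
  · intro h
    constructor
    · have := congrArg (fun d => d 0) h; simpa using this
    · have := congrArg (fun d => d 1) h; simpa using this
  · rintro ⟨rfl, rfl⟩; rfl

lemma Psi_monomial (d : Fin 2 →₀ ℕ) (c : ℂ) :
    Psi (monomial d c) = Polynomial.C (Polynomial.C c * Polynomial.X ^ (d 0)) * Polynomial.X ^ (d 1) := by
  rw [Psi, aeval_monomial]
  rw [Finsupp.prod_fintype _ _ (fun i => pow_zero _)]
  rw [Fin.prod_univ_two]
  simp only [Matrix.cons_val_zero, Matrix.cons_val_one, Matrix.head_cons]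
  rw [show (algebraMap ℂ (Polynomial (Polynomial ℂ))) c = Polynomial.C (Polynomial.C c) from rfl]
  rw [← Polynomial.C_pow, ← mul_assoc, ← map_mul]

lemma Psi_coeff_coeff (f : R2) (j s : ℕ) :
    ((Psi f).coeff s).coeff j = coeff (Dm j s) f := by
  induction f using MvPolynomial.induction_on' with
  | monomial d c =>
    rw [Psi_monomial, MvPolynomial.coeff_monomial]
    rw [Polynomial.coeff_C_mul_X_pow]
    by_cases h1 : d 1 = s
    · by_cases h0 : d 0 = j
      · rw [if_pos h1.symm]
        rw [Polynomial.coeff_C_mul, Polynomial.coeff_X_pow, if_pos h0.symm]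
        rw [if_pos (by rw [eq_Dm d, h0, h1])]
        ring
      · rw [if_pos h1.symm, Polynomial.coeff_C_mul, Polynomial.coeff_X_pow, if_neg (fun h => h0 h.symm)]
        rw [if_neg (by intro h; rw [eq_Dm d] at h; exact h0 (Dm_eq_iff.mp h).1)]
        ring
    · rw [if_neg (Ne.symm h1), if_neg (by intro h; rw [eq_Dm d] at h; exact h1 (Dm_eq_iff.mp h).2)]
      simp
  | add p q hp hq =>
    rw [map_add, Polynomial.coeff_add, Polynomial.coeff_add, MvPolynomial.coeff_add, hp, hq]

lemma Psi_inj : Function.Injective Psi := by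
  intro f g h
  apply MvPolynomial.ext
  intro d
  have := congrArg (fun p => (Polynomial.coeff (Polynomial.coeff p (d 1)) (d 0))) h
  simpa [Psi_coeff_coeff, ← eq_Dm] using this

@[simp] lemma Psi_X0 : Psi (X 0) = Polynomial.C Polynomial.X := by simp [Psi]
@[simp] lemma Psi_X1 : Psi (X 1) = Polynomial.X := by simp [Psi]

lemma mem_of_C_mul_mem {J : Ideal R2} {c : ℂ} (hc : c ≠ 0) {x : R2}
    (h : C c * x ∈ J) : x ∈ J := by
  have hx : x = C c⁻¹ * (C c * x) := by
    rw [← mul_assoc, ← C_mul, inv_mul_cancel₀ hc, C_1, one_mul]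
  rw [hx]
  exact J.mul_mem_left _ h

-- generators of Jp
lemma zp_g_mem (m : ℕ) : zp (2*m+1) ∈ Jp (2*m+1) :=
  Ideal.subset_span (by left; rfl)
lemma zp_g1_mem (m : ℕ) : zp (2*m+2) ∈ Jp (2*m+1) :=
  Ideal.subset_span (by right; left; rw [show 2*m+1+1 = 2*m+2 by ring])
lemma zp_g2_mem (m : ℕ) : zp (2*m+3) ∈ Jp (2*m+1) :=
  Ideal.subset_span (by right; right; rw [show 2*m+1+2 = 2*m+3 by ring]; rfl)

lemma cast_ne1 (t : ℕ) : (2*(2*((t:ℂ)+1)+1)*(2*((t:ℂ)+1))) ≠ 0 := by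
  have h : (2*(2*((t:ℂ)+1)+1)*(2*((t:ℂ)+1))) = ((2*(2*(t+1)+1)*(2*(t+1)) : ℕ) : ℂ) := by
    push_cast; ring
  rw [h]
  exact Nat.cast_ne_zero.mpr (by positivity)

lemma cast_ne2 (t : ℕ) : (2*(2*((t:ℂ)+1)+2)*(2*((t:ℂ)+1)+1)) ≠ 0 := by
  have h : (2*(2*((t:ℂ)+1)+2)*(2*((t:ℂ)+1)+1)) = ((2*(2*(t+1)+2)*(2*(t+1)+1) : ℕ) : ℂ) := by
    push_cast; ring
  rw [h]
  exact Nat.cast_ne_zero.mpr (by positivity)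

lemma PInd (m : ℕ) : ∀ i, i ≤ m →
    X 1 ^ i * zp (2*(m-i)+1) ∈ Jp (2*m+1) ∧
    X 1 ^ i * zp (2*(m-i)+2) ∈ Jp (2*m+1) ∧
    X 1 ^ i * zp (2*(m-i)+3) ∈ Jp (2*m+1) := by
  intro i
  induction i with
  | zero =>
    intro _
    simp only [pow_zero, one_mul, Nat.sub_zero]
    exact ⟨zp_g_mem m, zp_g1_mem m, zp_g2_mem m⟩
  | succ i ih =>
    intro hi
    obtain ⟨A, B, Cm⟩ := ih (by omega)
    obtain ⟨t, ht⟩ : ∃ t, m - i = t + 1 := ⟨m - i - 1, by omega⟩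
    have ht' : m - (i+1) = t := by omega
    rw [ht] at A B Cm
    rw [ht']
    have hA3 : X 1 ^ i * zp (2*t+3) ∈ Jp (2*m+1) := by
      rw [show 2*(t+1)+1 = 2*t+3 by ring] at A; exact A
    have hB4 : X 1 ^ i * zp (2*t+4) ∈ Jp (2*m+1) := by
      rw [show 2*(t+1)+2 = 2*t+4 by ring] at B; exact B
    have hC5 : X 1 ^ i * zp (2*t+5) ∈ Jp (2*m+1) := by
      rw [show 2*(t+1)+3 = 2*t+5 by ring] at Cm; exact Cm
    refine ⟨?_, ?_, ?_⟩
    · -- X1^{i+1} zp (2t+1)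
      apply mem_of_C_mul_mem (cast_ne1 t)
      have hEq : C (2*(2*((t:ℂ)+1)+1)*(2*((t:ℂ)+1))) * (X 1 ^ (i+1) * zp (2*t+1)) =
          X 1 ^ i * zp (2*t+4) - X 0 * (X 1 ^ i * zp (2*t+3)) := by
        have hro := zp_rec_odd (t+1)
        rw [show 2*(t+1)+2 = 2*t+4 by ring, show 2*(t+1)+1 = 2*t+3 by ring,
          show 2*(t+1)-1 = 2*t+1 by omega] at hro
        push_cast at hro ⊢
        rw [hro]; ring
      rw [hEq]
      exact sub_mem hB4 (Ideal.mul_mem_left _ _ hA3)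
    · -- X1^{i+1} zp (2t+2)
      apply mem_of_C_mul_mem (cast_ne2 t)
      have hEq : C (2*(2*((t:ℂ)+1)+2)*(2*((t:ℂ)+1)+1)) * (X 1 ^ (i+1) * zp (2*t+2)) =
          X 1 ^ i * zp (2*t+5) - X 0 * (X 1 ^ i * zp (2*t+4))
            - C (16*(2*((t:ℂ)+1)+2)^2) * (X 1 ^ i * zp (2*t+3)) := by
        have hre := zp_rec_even (t+1)
        rw [show 2*(t+1)+3 = 2*t+5 by ring, show 2*(t+1)+2 = 2*t+4 by ring,
          show 2*(t+1)+1 = 2*t+3 by ring, show 2*(t+1) = 2*t+2 by ring] at hre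
        push_cast at hre ⊢
        rw [hre]; ring
      rw [hEq]
      exact sub_mem (sub_mem hC5 (Ideal.mul_mem_left _ _ hB4)) (Ideal.mul_mem_left _ _ hA3)
    · -- X1^{i+1} zp (2t+3)
      have : X 1 ^ (i+1) * zp (2*t+3) = X 1 * (X 1 ^ i * zp (2*t+3)) := by ring
      rw [this]
      exact Ideal.mul_mem_left _ _ hA3

lemma X1_pow_mem (m : ℕ) : (X 1 : R2) ^ (m+1) ∈ Jp (2*m+1) := by
  obtain ⟨A, B, Cm⟩ := PInd m m le_rfl
  rw [Nat.sub_self] at A B Cm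
  norm_num at A B Cm
  apply mem_of_C_mul_mem (c := 4) (by norm_num)
  have hEq : (C 4 : R2) * X 1 ^ (m+1) =
      X 1 ^ m * zp 3 - X 0 * (X 1 ^ m * zp 2) - C 64 * (X 1 ^ m * zp 1) := by
    have h := zp_rec_even 0
    norm_num at h
    rw [h, show zp 0 = 1 from rfl]
    simp only [C_add, C_mul, C_pow, map_ofNat, C_1, C_0]
    ring
  rw [hEq]
  exact sub_mem (sub_mem Cm (Ideal.mul_mem_left _ _ B)) (Ideal.mul_mem_left _ _ A)

def Sset (m : ℕ) : Set R2 :=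
  {p | ∃ i : ℕ, i ≤ m ∧ p = (X 1 : R2) ^ i * zp (2*m+1 - 2*i)} ∪ {(X 1 : R2) ^ (m+1)}

lemma S_mem (m i : ℕ) (h : i ≤ m) : (X 1 : R2) ^ i * zp (2*(m-i)+1) ∈ Ideal.span (Sset m) :=
  Ideal.subset_span (Or.inl ⟨i, h, by rw [show 2*m+1-2*i = 2*(m-i)+1 by omega]⟩)

lemma S_mem2 (m : ℕ) : (X 1 : R2) ^ (m+1) ∈ Ideal.span (Sset m) :=
  Ideal.subset_span (Or.inr rfl)

lemma part1 (m : ℕ) : Jp (2*m+1) = Ideal.span (Sset m) := by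
  apply le_antisymm
  · rw [Jp, Ideal.span_le]
    rintro p (rfl | rfl | rfl)
    · have := S_mem m 0 (by omega)
      simpa using this
    · -- zp (2m+2)
      rw [show 2*m+1+1 = 2*m+2 by ring]
      cases m with
      | zero =>
        rw [show 2*0+2 = 2 by rfl, show zp 2 = X 0 * zp 1 from rfl]
        have := S_mem 0 0 le_rfl
        norm_num at this ⊢
        exact Ideal.mul_mem_left _ _ this
      | succ t =>
        have h := zp_rec_odd (t+1)
        rw [show 2*(t+1)+2 = 2*(t+1)+2 from rfl, show 2*(t+1)-1 = 2*t+1 by omega] at h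
        push_cast at h
        rw [h]
        apply add_mem
        · apply Ideal.mul_mem_left
          have := S_mem (t+1) 0 (by omega)
          simpa using this
        · have h1 : X 1 * zp (2*t+1) = X 1 ^ 1 * zp (2*((t+1)-1)+1) := by
            norm_num
          have := S_mem (t+1) 1 (by omega)
          rw [← h1] at this
          rw [show (C (2*(2*((t:ℂ)+1)+1)*(2*((t:ℂ)+1))) * X 1 * zp (2*t+1)) =
            C (2*(2*((t:ℂ)+1)+1)*(2*((t:ℂ)+1))) * (X 1 * zp (2*t+1)) by ring]
          exact Ideal.mul_mem_left _ _ this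
    · -- zp (2m+3)
      rw [show 2*m+1+2 = 2*m+3 by ring]
      match m with
      | 0 =>
        rw [show 2*0+3 = 3 by rfl, zp_star1]
        apply add_mem
        · apply Ideal.mul_mem_left
          have := S_mem 0 0 le_rfl; simpa using this
        · have h2 := S_mem2 0
          rw [show (0:ℕ)+1 = 1 by rfl, pow_one] at h2
          exact Ideal.mul_mem_left _ _ h2
      | 1 =>
        rw [show 2*1+3 = 5 by rfl, zp_star3]
        apply add_mem
        · apply Ideal.mul_mem_left
          have := S_mem 1 0 (by omega); simpa using this
        · have := S_mem 1 1 le_rfl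
          norm_num at this
          rw [show (C 36 : R2) * X 1 * X 0 * zp 1 = (C 36 * X 0) * (X 1 * zp 1) by ring]
          exact Ideal.mul_mem_left _ _ this
      | (t+2) =>
        have h := zp_star t
        rw [show 2*(t+2)+3 = 2*t+7 by ring, h]
        apply add_mem
        apply add_mem
        · apply Ideal.mul_mem_left
          have := S_mem (t+2) 0 (by omega)
          rw [show 2*((t+2)-0)+1 = 2*t+5 by omega] at this
          simpa using this
        · have := S_mem (t+2) 1 (by omega)
          rw [show 2*((t+2)-1)+1 = 2*t+3 by omega] at this
          rw [show C (4*(2*(t:ℂ)+5)^2) * X 1 * X 0 * zp (2*t+3)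
            = (C (4*(2*(t:ℂ)+5)^2) * X 0) * (X 1 ^ 1 * zp (2*t+3)) by ring]
          exact Ideal.mul_mem_left _ _ this
        · have := S_mem (t+2) 2 (by omega)
          rw [show 2*((t+2)-2)+1 = 2*t+1 by omega] at this
          rw [show C (4*(2*(t:ℂ)+5)*(2*(t:ℂ)+6)*(2*(t:ℂ)+3)*(2*(t:ℂ)+2)) * X 1^2 * zp (2*t+1)
            = C (4*(2*(t:ℂ)+5)*(2*(t:ℂ)+6)*(2*(t:ℂ)+3)*(2*(t:ℂ)+2)) * (X 1 ^ 2 * zp (2*t+1)) by ring]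
          exact Ideal.mul_mem_left _ _ this
  · rw [Ideal.span_le]
    rintro p (⟨i, hi, rfl⟩ | rfl)
    · have := (PInd m i hi).1
      rw [show 2*m+1-2*i = 2*(m-i)+1 by omega]
      exact this
    · exact X1_pow_mem m

-- ## The submodules
def Gset (m s : ℕ) : Set R2 :=
  {q | ∃ i : ℕ, s ≤ i ∧ i ≤ m ∧ ∃ j : ℕ, q = X 0 ^ j * (X 1 ^ i * zp (2*(m-i)+1))}
  ∪ {q | ∃ j t : ℕ, m+1 ≤ t ∧ q = X 0 ^ j * X 1 ^ t}

noncomputable def Ns (m s : ℕ) : Submodule ℂ R2 := Submodule.span ℂ (Gset m s)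

lemma G1_mem (m s i j : ℕ) (h1 : s ≤ i) (h2 : i ≤ m) :
    X 0 ^ j * (X 1 ^ i * zp (2*(m-i)+1)) ∈ Ns m s :=
  Submodule.subset_span (Or.inl ⟨i, h1, h2, j, rfl⟩)

lemma G2_mem (m s j t : ℕ) (h : m+1 ≤ t) : (X 0:R2) ^ j * X 1 ^ t ∈ Ns m s :=
  Submodule.subset_span (Or.inr ⟨j, t, h, rfl⟩)

lemma N_C_mul {M : Submodule ℂ R2} {c : ℂ} {x : R2} (h : x ∈ M) : C c * x ∈ M := by
  rw [← smul_eq_C_mul]; exact M.smul_mem _ h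

lemma N0_X_mul (m : ℕ) (i : Fin 2) (f : R2) (hf : f ∈ Ns m 0) : X i * f ∈ Ns m 0 := by
  induction hf using Submodule.span_induction with
  | mem x hx =>
    match i with
    | 0 =>
      rcases hx with ⟨i', _, him, j, rfl⟩ | ⟨j, t, ht, rfl⟩
      · rw [show X 0 * (X 0 ^ j * (X 1 ^ i' * zp (2*(m-i')+1)))
          = X 0 ^ (j+1) * (X 1 ^ i' * zp (2*(m-i')+1)) by ring]
        exact G1_mem m 0 i' (j+1) (by omega) him
      · rw [show (X 0:R2) * (X 0 ^ j * X 1 ^ t) = X 0 ^ (j+1) * X 1 ^ t by ring]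
        exact G2_mem m 0 (j+1) t ht
    | 1 =>
      rcases hx with ⟨i', _, him, j, rfl⟩ | ⟨j, t, ht, rfl⟩
      · -- case analysis on t' = m - i'
        obtain ⟨t', ht'⟩ : ∃ t', m = i' + t' := ⟨m - i', by omega⟩
        subst ht'
        rw [show i' + t' - i' = t' by omega]
        match t' with
        | 0 =>
          rw [show zp (2*0+1) = X 0 from rfl]
          rw [show (X 1:R2) * (X 0 ^ j * (X 1 ^ i' * X 0)) = X 0 ^ (j+1) * X 1 ^ (i'+1) by ring]
          exact G2_mem _ 0 (j+1) (i'+1) (by omega)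
        | 1 =>
          rw [show (2*1+1 : ℕ) = 3 from rfl, zp_star1]
          rw [show X 1 * (X 0 ^ j * (X 1 ^ i' * ((X 0^2 + C 64) * zp 1 + C 4 * X 1)))
            = X 0 ^ (j+2) * (X 1 ^ (i'+1) * zp 1) + C 64 * (X 0 ^ j * (X 1 ^ (i'+1) * zp 1))
              + C 4 * (X 0 ^ j * X 1 ^ (i'+2)) by ring]
          have g1 : X 0 ^ (j+2) * (X 1 ^ (i'+1) * zp 1) ∈ Ns (i'+1) 0 := by
            have := G1_mem (i'+1) 0 (i'+1) (j+2) (by omega) le_rfl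
            rw [show i'+1-(i'+1) = 0 by omega] at this
            exact this
          have g2 : X 0 ^ j * (X 1 ^ (i'+1) * zp 1) ∈ Ns (i'+1) 0 := by
            have := G1_mem (i'+1) 0 (i'+1) j (by omega) le_rfl
            rw [show i'+1-(i'+1) = 0 by omega] at this
            exact this
          have g3 : (X 0:R2) ^ j * X 1 ^ (i'+2) ∈ Ns (i'+1) 0 := G2_mem _ 0 j (i'+2) (by omega)
          exact add_mem (add_mem g1 (N_C_mul g2)) (N_C_mul g3)
        | 2 =>
          rw [show (2*2+1 : ℕ) = 5 from rfl, zp_star3]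
          rw [show X 1 * (X 0 ^ j * (X 1 ^ i' * ((X 0^2 + C 256) * zp 3 + C 36 * X 1 * X 0 * zp 1)))
            = X 0 ^ (j+2) * (X 1 ^ (i'+1) * zp 3) + C 256 * (X 0 ^ j * (X 1 ^ (i'+1) * zp 3))
              + C 36 * (X 0 ^ (j+1) * (X 1 ^ (i'+2) * zp 1)) by ring]
          have g1 : X 0 ^ (j+2) * (X 1 ^ (i'+1) * zp 3) ∈ Ns (i'+2) 0 := by
            have := G1_mem (i'+2) 0 (i'+1) (j+2) (by omega) (by omega)
            rw [show i'+2-(i'+1) = 1 by omega] at this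
            exact this
          have g2 : X 0 ^ j * (X 1 ^ (i'+1) * zp 3) ∈ Ns (i'+2) 0 := by
            have := G1_mem (i'+2) 0 (i'+1) j (by omega) (by omega)
            rw [show i'+2-(i'+1) = 1 by omega] at this
            exact this
          have g3 : X 0 ^ (j+1) * (X 1 ^ (i'+2) * zp 1) ∈ Ns (i'+2) 0 := by
            have := G1_mem (i'+2) 0 (i'+2) (j+1) (by omega) le_rfl
            rw [show i'+2-(i'+2) = 0 by omega] at this
            exact this
          exact add_mem (add_mem g1 (N_C_mul g2)) (N_C_mul g3)
        | (t''+3) =>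
          rw [show 2*(t''+3)+1 = 2*t''+7 by ring, zp_star t'']
          rw [show X 1 * (X 0 ^ j * (X 1 ^ i' * ((X 0^2 + C (16*(2*(t'':ℂ)+6)^2)) * zp (2*t''+5)
              + C (4*(2*(t'':ℂ)+5)^2) * X 1 * X 0 * zp (2*t''+3)
              + C (4*(2*(t'':ℂ)+5)*(2*(t'':ℂ)+6)*(2*(t'':ℂ)+3)*(2*(t'':ℂ)+2)) * X 1^2 * zp (2*t''+1))))
            = X 0 ^ (j+2) * (X 1 ^ (i'+1) * zp (2*t''+5))
              + C (16*(2*(t'':ℂ)+6)^2) * (X 0 ^ j * (X 1 ^ (i'+1) * zp (2*t''+5)))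
              + C (4*(2*(t'':ℂ)+5)^2) * (X 0 ^ (j+1) * (X 1 ^ (i'+2) * zp (2*t''+3)))
              + C (4*(2*(t'':ℂ)+5)*(2*(t'':ℂ)+6)*(2*(t'':ℂ)+3)*(2*(t'':ℂ)+2))
                * (X 0 ^ j * (X 1 ^ (i'+3) * zp (2*t''+1))) by ring]
          have g1 : ∀ jj, X 0 ^ jj * (X 1 ^ (i'+1) * zp (2*t''+5)) ∈ Ns (i'+(t''+3)) 0 := by
            intro jj
            have := G1_mem (i'+(t''+3)) 0 (i'+1) jj (by omega) (by omega)
            rw [show i'+(t''+3)-(i'+1) = t''+2 by omega, show 2*(t''+2)+1 = 2*t''+5 by ring] at this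
            exact this
          have g3 : X 0 ^ (j+1) * (X 1 ^ (i'+2) * zp (2*t''+3)) ∈ Ns (i'+(t''+3)) 0 := by
            have := G1_mem (i'+(t''+3)) 0 (i'+2) (j+1) (by omega) (by omega)
            rw [show i'+(t''+3)-(i'+2) = t''+1 by omega, show 2*(t''+1)+1 = 2*t''+3 by ring] at this
            exact this
          have g4 : X 0 ^ j * (X 1 ^ (i'+3) * zp (2*t''+1)) ∈ Ns (i'+(t''+3)) 0 := by
            have := G1_mem (i'+(t''+3)) 0 (i'+3) j (by omega) (by omega)
            rw [show i'+(t''+3)-(i'+3) = t'' by omega] at this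
            exact this
          exact add_mem (add_mem (add_mem (g1 (j+2)) (N_C_mul (g1 j))) (N_C_mul g3)) (N_C_mul g4)
      · rw [show (X 1:R2) * (X 0 ^ j * X 1 ^ t) = X 0 ^ j * X 1 ^ (t+1) by ring]
        exact G2_mem m 0 j (t+1) (by omega)
  | zero => rw [mul_zero]; exact zero_mem _
  | add x y _ _ hx hy => rw [mul_add]; exact add_mem hx hy
  | smul c x _ hx => rw [mul_smul_comm]; exact Submodule.smul_mem _ _ hx

lemma N0_mul (m : ℕ) (y f : R2) (hf : f ∈ Ns m 0) : y * f ∈ Ns m 0 := by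
  induction y using MvPolynomial.induction_on with
  | C a => rw [← smul_eq_C_mul]; exact Submodule.smul_mem _ _ hf
  | add p q hp hq => rw [add_mul]; exact add_mem hp hq
  | mul_X p n hp =>
    rw [show p * X n * f = X n * (p * f) by ring]
    exact N0_X_mul m n _ hp

-- ## Pp
noncomputable def Pp (k : ℕ) : Polynomial ℂ := (Psi (zp k)).coeff 0

lemma Pp_coeff_top (k : ℕ) : (Pp k).coeff k = 1 := by
  rw [Pp, Psi_coeff_coeff]
  have : zp k = (zp k - X 0 ^ k) + X 0 ^ k := by ring
  rw [this, MvPolynomial.coeff_add]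
  have h1 : coeff (Dm k 0) (zp k - X 0 ^ k) = 0 := by
    by_contra h
    have := (zp_wt k).1 _ (MvPolynomial.mem_support_iff.mpr h)
    rw [Dm_apply0, Dm_apply1] at this
    omega
  have h2 : coeff (Dm k 0) ((X 0:R2) ^ k) = 1 := by
    rw [MvPolynomial.X_pow_eq_monomial, MvPolynomial.coeff_monomial,
      if_pos (by rw [Dm]; simp)]
  rw [h1, h2, zero_add]

lemma Pp_coeff_gt {k j : ℕ} (h : k < j) : (Pp k).coeff j = 0 := by
  rw [Pp, Psi_coeff_coeff]
  have : zp k = (zp k - X 0 ^ k) + X 0 ^ k := by ring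
  rw [this, MvPolynomial.coeff_add]
  have h1 : coeff (Dm j 0) (zp k - X 0 ^ k) = 0 := by
    by_contra hcon
    have := (zp_wt k).1 _ (MvPolynomial.mem_support_iff.mpr hcon)
    rw [Dm_apply0, Dm_apply1] at this
    omega
  have h2 : coeff (Dm j 0) ((X 0:R2) ^ k) = 0 := by
    rw [MvPolynomial.X_pow_eq_monomial, MvPolynomial.coeff_monomial, if_neg]
    intro hcon
    have := congrArg (fun d => d 0) hcon
    simp only [Dm_apply0] at this
    simp at this
    omega
  rw [h1, h2, zero_add]

lemma Pp_natDegree (k : ℕ) : (Pp k).natDegree = k := by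
  apply le_antisymm
  · exact Polynomial.natDegree_le_iff_coeff_eq_zero.mpr (fun j hj => Pp_coeff_gt hj)
  · exact Polynomial.le_natDegree_of_ne_zero (by rw [Pp_coeff_top]; norm_num)

lemma Pp_monic (k : ℕ) : (Pp k).Monic :=
  Polynomial.monic_of_natDegree_le_of_coeff_eq_one k (le_of_eq (Pp_natDegree k)) (Pp_coeff_top k)

-- ## coeff vanishing on Ns
lemma Ns_coeff_lt (m s : ℕ) (hsm : s ≤ m+1) (f : R2) (hf : f ∈ Ns m s) :
    ∀ s' < s, (Psi f).coeff s' = 0 := by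
  induction hf using Submodule.span_induction with
  | mem x hx =>
    intro s' hs'
    rcases hx with ⟨i, hsi, _, j, rfl⟩ | ⟨j, t, ht, rfl⟩
    · rw [map_mul, map_mul, map_pow, map_pow, Psi_X0, Psi_X1, ← Polynomial.C_pow,
        Polynomial.coeff_C_mul, mul_comm (Polynomial.X ^ i), Polynomial.coeff_mul_X_pow',
        if_neg (by omega), mul_zero]
    · rw [map_mul, map_pow, map_pow, Psi_X0, Psi_X1, ← Polynomial.C_pow,
        Polynomial.coeff_C_mul, Polynomial.coeff_X_pow, if_neg (by omega), mul_zero]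
  | zero => intro s' _; simp
  | add x y _ _ hx hy => intro s' hs'; rw [map_add, Polynomial.coeff_add, hx s' hs', hy s' hs', add_zero]
  | smul c x _ hx => intro s' hs'; rw [map_smul, Polynomial.coeff_smul, hx s' hs', smul_zero]

-- ## representation of span A_s
noncomputable def phi : Polynomial ℂ →ₐ[ℂ] R2 := Polynomial.aeval (X 0 : R2)

lemma Psi_phi (h : Polynomial ℂ) : Psi (phi h) = Polynomial.C h := by
  induction h using Polynomial.induction_on' with
  | monomial n a =>
    rw [phi, Polynomial.aeval_monomial, map_mul, map_pow, Psi_X0]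
    rw [show (Psi : R2 →ₐ[ℂ] _) ((algebraMap ℂ R2) a) = Polynomial.C (Polynomial.C a) from by
      rw [AlgHom.commutes]; rfl]
    rw [← Polynomial.C_pow, ← map_mul, Polynomial.C_mul_X_pow_eq_monomial]
  | add p q hp hq => simp [map_add, hp, hq]

lemma spanA_rep (u : R2) (f : R2)
    (hf : f ∈ Submodule.span ℂ {q | ∃ j : ℕ, q = X 0 ^ j * u}) :
    ∃ h : Polynomial ℂ, f = phi h * u := by
  let L : Polynomial ℂ →ₗ[ℂ] R2 := (LinearMap.mulRight ℂ u).comp phi.toLinearMap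
  have : Submodule.span ℂ {q | ∃ j : ℕ, q = X 0 ^ j * u} ≤ LinearMap.range L := by
    rw [Submodule.span_le]
    rintro q ⟨j, rfl⟩
    exact ⟨Polynomial.X ^ j, by simp [L, phi]⟩
  obtain ⟨h, rfl⟩ := this hf
  exact ⟨h, rfl⟩

-- ## the key lemma
def Tprop (m : ℕ) (f : R2) : Prop := ∀ d ∈ f.support, d 1 ≤ m ∧ d 0 ≤ 2*(m - d 1)

lemma key (m : ℕ) : ∀ r s f, s + r = m + 1 → f ∈ Ns m s → Tprop m f → f = 0 := by
  intro r
  induction r with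
  | zero =>
    intro s f hs hf hT
    apply Psi_inj
    rw [map_zero]
    ext n j
    rw [Polynomial.coeff_zero, Polynomial.coeff_zero]
    by_cases hn : n ≤ m
    · rw [Ns_coeff_lt m s (by omega) f hf n (by omega)]
      simp
    · rw [Psi_coeff_coeff]
      by_contra hne
      have := hT _ (MvPolynomial.mem_support_iff.mpr hne)
      rw [Dm_apply0, Dm_apply1] at this
      omega
  | succ r ih =>
    intro s f hs hf hT
    have hsm : s ≤ m := by omega
    have hGsplit : Gset m s
        = {q | ∃ j : ℕ, q = X 0 ^ j * (X 1 ^ s * zp (2*(m-s)+1))} ∪ Gset m (s+1) := by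
      ext q
      constructor
      · rintro (⟨i, hsi, him, j, rfl⟩ | h2)
        · rcases eq_or_lt_of_le hsi with rfl | hlt
          · exact Or.inl ⟨j, rfl⟩
          · exact Or.inr (Or.inl ⟨i, by omega, him, j, rfl⟩)
        · exact Or.inr (Or.inr h2)
      · rintro (⟨j, rfl⟩ | (⟨i, h1, h2, j, rfl⟩ | h2))
        · exact Or.inl ⟨s, le_rfl, hsm, j, rfl⟩
        · exact Or.inl ⟨i, by omega, h2, j, rfl⟩
        · exact Or.inr h2
    rw [Ns, hGsplit, Submodule.span_union] at hf
    obtain ⟨f₁, hf₁, f₂, hf₂, rfl⟩ := Submodule.mem_sup.mp hf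
    obtain ⟨h, rfl⟩ := spanA_rep _ f₁ hf₁
    have hc2 : (Psi f₂).coeff s = 0 :=
      Ns_coeff_lt m (s+1) (by omega) f₂ hf₂ s (by omega)
    have hpsi1 : (Psi (phi h * (X 1 ^ s * zp (2*(m-s)+1)))).coeff s = h * Pp (2*(m-s)+1) := by
      rw [map_mul, Psi_phi, Polynomial.coeff_C_mul]
      refine congrArg (h * ·) ?_
      rw [map_mul, map_pow, Psi_X1, mul_comm]
      have := Polynomial.coeff_mul_X_pow (Psi (zp (2*(m-s)+1))) s 0
      rw [zero_add] at this
      rw [this, Pp]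
    have hsum : (Psi (phi h * (X 1 ^ s * zp (2*(m-s)+1)) + f₂)).coeff s
        = h * Pp (2*(m-s)+1) := by
      rw [map_add, Polynomial.coeff_add, hpsi1, hc2, add_zero]
    have hdeg : ∀ j, 2*(m-s) < j
        → ((Psi (phi h * (X 1 ^ s * zp (2*(m-s)+1)) + f₂)).coeff s).coeff j = 0 := by
      intro j hj
      rw [Psi_coeff_coeff]
      by_contra hne
      have := hT _ (MvPolynomial.mem_support_iff.mpr hne)
      rw [Dm_apply0, Dm_apply1] at this
      omega
    have hh : h = 0 := by
      by_contra hh0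
      have hPne : Pp (2*(m-s)+1) ≠ 0 := (Pp_monic _).ne_zero
      have hmulne : h * Pp (2*(m-s)+1) ≠ 0 := mul_ne_zero hh0 hPne
      have hnd : (h * Pp (2*(m-s)+1)).natDegree = h.natDegree + (2*(m-s)+1) := by
        rw [Polynomial.natDegree_mul hh0 hPne, Pp_natDegree]
      have hlc := hdeg ((h * Pp (2*(m-s)+1)).natDegree) (by omega)
      rw [hsum] at hlc
      exact hmulne (Polynomial.leadingCoeff_eq_zero.mp hlc)
    rw [hh, map_zero, zero_mul, zero_add] at hT ⊢
    exact ih (s+1) f₂ (by omega) hf₂ hT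



-- ## basic monomial facts
lemma mon_eq (j i : ℕ) : (X 0:R2) ^ j * X 1 ^ i = monomial (Dm j i) 1 := by
  rw [MvPolynomial.X_pow_eq_monomial, MvPolynomial.X_pow_eq_monomial,
    MvPolynomial.monomial_mul, one_mul, Dm]

-- ## NI : the ideal structure on Ns m 0
noncomputable def NI (m : ℕ) : Ideal R2 where
  carrier := Ns m 0
  zero_mem' := zero_mem _
  add_mem' := fun h1 h2 => add_mem h1 h2
  smul_mem' := fun r x hx => by
    rw [smul_eq_mul]; exact N0_mul m r x hx

lemma Jp_le_Ns (m : ℕ) : ∀ x ∈ Jp (2*m+1), x ∈ Ns m 0 := by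
  intro x hx
  rw [part1 m] at hx
  have hle : Ideal.span (Sset m) ≤ NI m := by
    rw [Ideal.span_le]
    rintro p (⟨i, hi, rfl⟩ | rfl)
    · show X 1 ^ i * zp (2*m+1-2*i) ∈ Ns m 0
      have := G1_mem m 0 i 0 (by omega) hi
      rw [pow_zero, one_mul, show 2*(m-i)+1 = 2*m+1-2*i by omega] at this
      exact this
    · show (X 1:R2) ^ (m+1) ∈ Ns m 0
      have := G2_mem m 0 0 (m+1) le_rfl
      rw [pow_zero, one_mul] at this
      exact this
  exact hle hx

-- ## spanning
def Tgens (m : ℕ) : Set R2 :=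
  {q | ∃ i j : ℕ, i ≤ m ∧ j ≤ 2*(m-i) ∧ q = X 0 ^ j * X 1 ^ i}

noncomputable def Uspan (m : ℕ) : Submodule ℂ R2 :=
  Submodule.span ℂ (Tgens m) ⊔ (Jp (2*m+1)).restrictScalars ℂ

lemma J_mem_Uspan (m : ℕ) {x : R2} (hx : x ∈ Jp (2*m+1)) : x ∈ Uspan m :=
  Submodule.mem_sup_right hx

lemma span_step (m : ℕ) : ∀ w : ℕ, ∀ h : R2,
    (∀ d ∈ h.support, d 0 + 2 * d 1 < w) → h ∈ Uspan m := by
  intro w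
  induction w using Nat.strong_induction_on with
  | _ w ih =>
    intro h hsupp
    rw [MvPolynomial.as_sum h]
    apply Submodule.sum_mem
    intro d hd
    have hmon : (monomial d (coeff d h) : R2) = coeff d h • (X 0 ^ (d 0) * X 1 ^ (d 1)) := by
      rw [mon_eq, ← eq_Dm, MvPolynomial.smul_monomial, smul_eq_mul, mul_one]
    rw [hmon]
    apply Submodule.smul_mem
    have hw := hsupp d hd
    -- show the monomial is in Uspan
    by_cases him : d 1 ≤ m
    · by_cases hj : d 0 ≤ 2*(m - d 1)
      · exact Submodule.mem_sup_left (Submodule.subset_span ⟨d 1, d 0, him, hj, rfl⟩)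
      · -- reduction case
        set i := d 1
        set j := d 0
        set k := 2*(m-i)+1 with hk
        have hjk : k ≤ j := by omega
        have hsplit : (X 0:R2) ^ j * X 1 ^ i
            = X 0 ^ (j-k) * (X 1 ^ i * zp k) - X 0 ^ (j-k) * X 1 ^ i * (zp k - X 0 ^ k) := by
          have : (X 0:R2) ^ (j-k) * X 0 ^ k = X 0 ^ j := by
            rw [← pow_add]; congr 1; omega
          rw [mul_sub]
          rw [show X 0 ^ (j-k) * X 1 ^ i * X 0 ^ k = (X 0:R2) ^ (j-k) * X 0 ^ k * X 1 ^ i by ring,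
            this]
          ring
        rw [hsplit]
        apply sub_mem
        · apply J_mem_Uspan
          exact Ideal.mul_mem_left _ _ (PInd m i him).1
        · -- remainder has smaller weight
          apply ih (j + 2*i) (by omega)
          intro e he
          have hsub := MvPolynomial.support_mul (X 0 ^ (j-k) * X 1 ^ i) (zp k - X 0 ^ k) he
          rw [Finset.mem_add] at hsub
          obtain ⟨e1, he1, e2, he2, rfl⟩ := hsub
          rw [mon_eq] at he1
          have he1' := MvPolynomial.support_monomial_subset he1
          rw [Finset.mem_singleton] at he1'
          subst he1'
          have hw2 := (zp_wt k).1 e2 he2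
          have h0 : (Dm (j-k) i + e2) 0 = (j-k) + e2 0 := by
            rw [Finsupp.add_apply, Dm_apply0]
          have h1 : (Dm (j-k) i + e2) 1 = i + e2 1 := by
            rw [Finsupp.add_apply, Dm_apply1]
          rw [h0, h1]
          omega
    · -- d 1 ≥ m+1
      apply J_mem_Uspan
      have : (X 0:R2) ^ (d 0) * X 1 ^ (d 1)
          = (X 0 ^ (d 0) * X 1 ^ (d 1 - (m+1))) * X 1 ^ (m+1) := by
        rw [mul_assoc, ← pow_add]
        congr 2
        omega
      rw [this]
      exact Ideal.mul_mem_left _ _ (X1_pow_mem m)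

lemma Uspan_top (m : ℕ) (f : R2) : f ∈ Uspan m := by
  have hbound : ∀ d ∈ f.support, d 0 + 2 * d 1 < 2 * f.totalDegree + 1 := by
    intro d hd
    have := MvPolynomial.le_totalDegree hd
    have hsum : (d.sum fun _ e => e) = d 0 + d 1 := by
      rw [Finsupp.sum_fintype _ _ (fun _ => rfl), Fin.sum_univ_two]
    omega
  exact span_step m _ f hbound



theorem Jp_groebner_basis (g : ℕ) (hg : 1 ≤ g) (hodd : Odd g) :
    Jp g = Ideal.span
      ({p | ∃ i : ℕ, i ≤ (g - 1) / 2 ∧ p = (X 1 : MvPolynomial (Fin 2) ℂ) ^ i * zp (g - 2 * i)}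
        ∪ {(X 1 : MvPolynomial (Fin 2) ℂ) ^ ((g + 1) / 2)}) ∧
    ∃ b : Module.Basis {p : ℕ × ℕ // p.1 ≤ (g - 1) / 2 ∧ p.2 ≤ g - 2 * p.1 - 1} ℂ
        (MvPolynomial (Fin 2) ℂ ⧸ Jp g),
      ∀ p, b p = Ideal.Quotient.mk (Jp g)
        ((X 0 : MvPolynomial (Fin 2) ℂ) ^ (p : ℕ × ℕ).2
          * (X 1 : MvPolynomial (Fin 2) ℂ) ^ (p : ℕ × ℕ).1) := by
  classical
  obtain ⟨m, rfl⟩ : ∃ m, g = 2*m+1 := by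
    obtain ⟨k, hk⟩ := hodd; exact ⟨k, by omega⟩
  constructor
  · rw [part1 m]
    congr 1
    rw [show (2*m+1-1)/2 = m by omega, show (2*m+1+1)/2 = m+1 by omega]
    rw [Sset]
  · set mk2 := Ideal.Quotient.mkₐ ℂ (Jp (2*m+1)) with hmk2
    set v : {p : ℕ × ℕ // p.1 ≤ (2*m+1 - 1) / 2 ∧ p.2 ≤ 2*m+1 - 2 * p.1 - 1}
        → (R2 ⧸ Jp (2*m+1)) :=
      fun p => mk2 ((X 0 : R2) ^ (p : ℕ × ℕ).2 * (X 1 : R2) ^ (p : ℕ × ℕ).1) with hv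
    have hcond : ∀ p : {p : ℕ × ℕ // p.1 ≤ (2*m+1 - 1) / 2 ∧ p.2 ≤ 2*m+1 - 2 * p.1 - 1},
        (p : ℕ × ℕ).1 ≤ m ∧ (p : ℕ × ℕ).2 ≤ 2*(m - (p : ℕ × ℕ).1) := by
      intro p
      obtain ⟨h1, h2⟩ := p.2
      omega
    have hli : LinearIndependent ℂ v := by
      rw [linearIndependent_iff']
      intro s c hsum p hp
      set F : R2 := ∑ q ∈ s, c q • ((X 0 : R2) ^ (q : ℕ × ℕ).2 * (X 1 : R2) ^ (q : ℕ × ℕ).1)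
        with hF
      have hmkF : mk2 F = 0 := by
        rw [hF, map_sum]
        simp only [map_smul]
        exact hsum
      have hFJ : F ∈ Jp (2*m+1) := by
        rwa [hmk2, Ideal.Quotient.mkₐ_eq_mk, Ideal.Quotient.eq_zero_iff_mem] at hmkF
      have hT : Tprop m F := by
        intro d hd
        rw [MvPolynomial.mem_support_iff, hF, MvPolynomial.coeff_sum] at hd
        obtain ⟨q, hq, hne⟩ := Finset.exists_ne_zero_of_sum_ne_zero hd
        rw [MvPolynomial.coeff_smul, mon_eq, MvPolynomial.coeff_monomial] at hne
        by_cases hdq : Dm (q : ℕ × ℕ).2 (q : ℕ × ℕ).1 = d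
        · have h1 := congrArg (fun e => e 0) hdq
          have h2 := congrArg (fun e => e 1) hdq
          simp only [Dm_apply0, Dm_apply1] at h1 h2
          have := hcond q
          omega
        · rw [if_neg hdq, smul_zero] at hne
          exact absurd rfl hne
      have hF0 : F = 0 := key m (m+1) 0 F (by omega) (Jp_le_Ns m F hFJ) hT
      have hcp : coeff (Dm (p : ℕ × ℕ).2 (p : ℕ × ℕ).1) F = c p := by
        rw [hF, MvPolynomial.coeff_sum, Finset.sum_eq_single p]
        · rw [MvPolynomial.coeff_smul, mon_eq, MvPolynomial.coeff_monomial, if_pos rfl,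
            smul_eq_mul, mul_one]
        · intro q hq hqp
          rw [MvPolynomial.coeff_smul, mon_eq, MvPolynomial.coeff_monomial, if_neg, smul_zero]
          intro hcon
          obtain ⟨ha, hb⟩ := Dm_eq_iff.mp hcon
          exact hqp (Subtype.ext (Prod.ext hb ha))
        · intro hps
          exact absurd hp hps
      rw [hF0] at hcp
      simpa using hcp.symm
    have hsp : ⊤ ≤ Submodule.span ℂ (Set.range v) := by
      intro x _
      obtain ⟨f, rfl⟩ := Ideal.Quotient.mkₐ_surjective ℂ (I := Jp (2*m+1)) x
      have hU := Uspan_top m f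
      rw [Uspan] at hU
      obtain ⟨t, ht, jj, hj, rfl⟩ := Submodule.mem_sup.mp hU
      have hjj : mk2 jj = 0 := by
        rw [hmk2, Ideal.Quotient.mkₐ_eq_mk, Ideal.Quotient.eq_zero_iff_mem]
        exact hj
      rw [show mk2 (t + jj) = mk2 t + mk2 jj from map_add _ _ _, hjj, add_zero]
      have hle : Submodule.span ℂ (Tgens m)
          ≤ Submodule.comap mk2.toLinearMap (Submodule.span ℂ (Set.range v)) := by
        rw [Submodule.span_le]
        rintro q ⟨i, j, him, hij, rfl⟩
        simp only [Set.mem_preimage, SetLike.mem_coe, Submodule.mem_comap]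
        apply Submodule.subset_span
        exact ⟨⟨(i, j), by constructor <;> omega⟩, rfl⟩
      exact hle ht
    refine ⟨Module.Basis.mk hli hsp, fun p => ?_⟩
    rw [Module.Basis.mk_apply, hv, hmk2, Ideal.Quotient.mkₐ_eq_mk]
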